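/- arXiv:0902.0576 — 10 statements merged into one kernel-verified Lean document; each statement's English description precedes it below -/
import Mathlib

section
/- Let c = cos(2π/9). Let x and d be real numbers with 1 < x ≤ c/(2c − 1), and suppose cosh d ≥ 1 + 1/(x − 1). Then cosh(d/2) ≥ 1/√(2(1 − c)). (This is the computational core of Lemma 2.7: if cosh ℓ₁ ≤ cos(2π/9)/(2cos(2π/9) − 1), then the inequality cosh d₁₁ ≥ 1 + 1/(cosh ℓ₁ − 1) implies d₁₁ ≥ 2R″, where cosh R″ = 1/√(2(1 − cos(2π/9))).) -/
/-- Computational core of Lemma 2.7: with c = cos(2π/9), if 1 < x ≤ c/(2c − 1)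
and cosh d ≥ 1 + 1/(x − 1), then cosh(d/2) ≥ 1/√(2(1 − c)). -/
theorem stmt_4 (x d : ℝ) (hx1 : 1 < x)
    (hx2 : x ≤ Real.cos (2 * Real.pi / 9) / (2 * Real.cos (2 * Real.pi / 9) - 1))
    (hd : Real.cosh d ≥ 1 + 1 / (x - 1)) :
    Real.cosh (d / 2) ≥ 1 / Real.sqrt (2 * (1 - Real.cos (2 * Real.pi / 9))) := by
  set c := Real.cos (2 * Real.pi / 9) with hc
  have hpi : (0:ℝ) < Real.pi := Real.pi_pos
  have hhalf : (1:ℝ)/2 < c := by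
    have : Real.cos (Real.pi / 3) < c := by
      apply Real.cos_lt_cos_of_nonneg_of_le_pi
      · positivity
      · linarith
      · linarith
    rwa [Real.cos_pi_div_three] at this
  have hc1 : c < 1 := by
    have h := Real.cos_lt_cos_of_nonneg_of_le_pi (x := 0) (y := 2 * Real.pi / 9) (le_refl 0) (by linarith) (by positivity)
    rwa [Real.cos_zero] at h
  have hx1' : 0 < x - 1 := by linarith
  have h2c : 0 < 2 * c - 1 := by linarith
  have h1c : 0 < 1 - c := by linarith
  -- from hx2 : x * (2c - 1) ≤ c
  have hxc : x * (2 * c - 1) ≤ c := by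
    rw [le_div_iff₀ h2c] at hx2; exact hx2
  -- cosh d ≥ c / (1 - c)
  have hkey : Real.cosh d ≥ c / (1 - c) := by
    have h1 : c / (1 - c) ≤ 1 + 1 / (x - 1) := by
      rw [div_le_iff₀ h1c]
      have : (1 + 1 / (x - 1)) * (1 - c) = (x - c * x) / (x - 1) := by
        field_simp; ring
      rw [this, le_div_iff₀ hx1']
      nlinarith
    linarith
  -- cosh(d/2)^2 ≥ 1 / (2(1-c))
  have hsq : Real.cosh (d / 2) ^ 2 ≥ 1 / (2 * (1 - c)) := by
    have hdd : Real.cosh d = 2 * Real.cosh (d / 2) ^ 2 - 1 := by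
      rw [show d = 2 * (d / 2) by ring, Real.cosh_two_mul, Real.sinh_sq]
      ring
    have hkey' : c ≤ Real.cosh d * (1 - c) := (div_le_iff₀ h1c).mp hkey
    rw [ge_iff_le, div_le_iff₀ (by positivity)]
    nlinarith [hkey', hdd]
  have hs : (0:ℝ) < 2 * (1 - c) := by positivity
  have heq : (1 : ℝ) / Real.sqrt (2 * (1 - c)) = Real.sqrt ((2 * (1 - c))⁻¹) := by
    rw [Real.sqrt_inv, one_div]
  rw [heq]
  calc Real.sqrt ((2 * (1 - c))⁻¹) ≤ Real.sqrt (Real.cosh (d / 2) ^ 2) := by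
        apply Real.sqrt_le_sqrt; rw [← one_div]; exact hsq
    _ = Real.cosh (d / 2) := Real.sqrt_sq ((Real.cosh_pos _).le)
end

section
/- Let R_a, R_b, S_a, S_b be nonnegative real numbers with cosh S_a = 3 − cosh R_a and cosh S_b = 3 − cosh R_b. (i) If R_a < R_b and cosh R_b ≤ 3/2, then R_a + S_a < R_b + S_b. (ii) If 3/2 ≤ cosh R_a, R_a < R_b, and cosh R_b ≤ 2, then R_a + S_a > R_b + S_b. (This is the monotonicity claim in the proof of Lemma 3.3: with R′ = arcosh(3 − cosh R), the function R + R′ increases for 1 < cosh R < 3/2, reaches its maximum at cosh R = 3/2, and decreases for cosh R > 3/2.) -/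
open Real

private lemma cosh_prod (x y : ℝ) :
    2 * (Real.cosh ((x+y)/2) * Real.cosh ((x-y)/2)) = Real.cosh x + Real.cosh y := by
  have h1 := Real.cosh_add ((x+y)/2) ((x-y)/2)
  have h2 := Real.cosh_sub ((x+y)/2) ((x-y)/2)
  have e1 : (x+y)/2 + ((x-y)/2) = x := by ring
  have e2 : (x+y)/2 - ((x-y)/2) = y := by ring
  rw [e1] at h1; rw [e2] at h2
  linarith

private lemma cosh_lt_iff {x y : ℝ} (hx : 0 ≤ x) (hy : 0 ≤ y) :
    Real.cosh x < Real.cosh y ↔ x < y := by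
  rw [Real.cosh_lt_cosh, abs_of_nonneg hx, abs_of_nonneg hy]

/-- Monotonicity claim in the proof of Lemma 3.3: with S = arcosh(3 − cosh R),
the function R + S increases for cosh R < 3/2 and decreases for cosh R > 3/2. -/
theorem stmt_5 (Ra Rb Sa Sb : ℝ) (hRa : 0 ≤ Ra) (hRb : 0 ≤ Rb)
    (hSa : 0 ≤ Sa) (hSb : 0 ≤ Sb)
    (ha : Real.cosh Sa = 3 - Real.cosh Ra)
    (hb : Real.cosh Sb = 3 - Real.cosh Rb) :
    (Ra < Rb → Real.cosh Rb ≤ 3 / 2 → Ra + Sa < Rb + Sb) ∧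
      (3 / 2 ≤ Real.cosh Ra → Ra < Rb → Real.cosh Rb ≤ 2 → Ra + Sa > Rb + Sb) := by
  have pa := cosh_prod Ra Sa
  have pb := cosh_prod Rb Sb
  rw [ha] at pa
  rw [hb] at pb
  -- so 2 * cosh((R+S)/2) * cosh((R-S)/2) = 3 in both cases
  have hRab : Real.cosh Ra < Real.cosh Rb → Ra < Rb := fun h => (cosh_lt_iff hRa hRb).1 h
  constructor
  · intro hlt hb32
    have hcR : Real.cosh Ra < Real.cosh Rb := (cosh_lt_iff hRa hRb).2 hlt
    -- Sb ≥ Rb and Sa > Sb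
    have hSbRb : Rb ≤ Sb := by
      by_contra h
      push_neg at h
      have : Real.cosh Sb < Real.cosh Rb := (cosh_lt_iff hSb hRb).2 h
      have h1 : 1 ≤ Real.cosh Sb := Real.one_le_cosh Sb
      linarith
    have hSab : Sb < Sa := by
      refine (cosh_lt_iff hSb hSa).1 ?_
      rw [ha, hb]; linarith
    -- diff comparison
    have hd : Sb - Rb < Sa - Ra := by linarith
    have hdnn : 0 ≤ Sb - Rb := by linarith
    have hcd : Real.cosh ((Rb - Sb)/2) < Real.cosh ((Ra - Sa)/2) := by
      have e1 : (Rb - Sb)/2 = -((Sb - Rb)/2) := by ring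
      have e2 : (Ra - Sa)/2 = -((Sa - Ra)/2) := by ring
      rw [e1, e2, Real.cosh_neg, Real.cosh_neg]
      exact (cosh_lt_iff (by linarith) (by linarith)).2 (by linarith)
    have hsum : Real.cosh ((Ra + Sa)/2) < Real.cosh ((Rb + Sb)/2) := by
      nlinarith [Real.cosh_pos ((Ra + Sa)/2), Real.cosh_pos ((Rb + Sb)/2),
        Real.cosh_pos ((Ra - Sa)/2), Real.cosh_pos ((Rb - Sb)/2)]
    have := (cosh_lt_iff (by linarith) (by linarith)).1 hsum
    linarith
  · intro ha32 hlt hb2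
    have hcR : Real.cosh Ra < Real.cosh Rb := (cosh_lt_iff hRa hRb).2 hlt
    have hSaRa : Sa ≤ Ra := by
      by_contra h
      push_neg at h
      have : Real.cosh Ra < Real.cosh Sa := (cosh_lt_iff hRa hSa).2 h
      linarith
    have hSbRb : Sb < Rb := by
      refine (cosh_lt_iff hSb hRb).1 ?_
      rw [hb]; linarith
    have hSab : Sb < Sa := by
      refine (cosh_lt_iff hSb hSa).1 ?_
      rw [ha, hb]; linarith
    have hcd : Real.cosh ((Ra - Sa)/2) < Real.cosh ((Rb - Sb)/2) :=
      (cosh_lt_iff (by linarith) (by linarith)).2 (by linarith)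
    have hsum : Real.cosh ((Rb + Sb)/2) < Real.cosh ((Ra + Sa)/2) := by
      nlinarith [Real.cosh_pos ((Ra + Sa)/2), Real.cosh_pos ((Rb + Sb)/2),
        Real.cosh_pos ((Ra - Sa)/2), Real.cosh_pos ((Rb - Sb)/2)]
    have := (cosh_lt_iff (by linarith) (by linarith)).1 hsum
    linarith
end

section
/- Let ℓ_a, ℓ_b be positive reals with ℓ_a < ℓ_b, (3+√3)/4 ≤ cosh ℓ_a, and cosh ℓ_b ≤ 1.4. For i ∈ {a,b}, let R_i ≥ 0, S_i ≥ 0, E_i ≥ 0 be defined by cosh R_i = √(1 + 1/(2·cosh ℓ_i − 2)), cosh S_i = 3 − cosh R_i, and cosh E_i = 2/(cosh²(R_i + S_i)·tanh²ℓ_i − 1) + 1. Then E_b ≤ E_a. (This is Lemma 3.3 of the paper: the quantity E of equation (6) is decreasing in ℓ₁ on the interval (3+√3)/4 ≤ cosh ℓ₁ ≤ 1.4.) -/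
private lemma aux_sqrt3 : (1.7:ℝ) ≤ Real.sqrt 3 ∧ Real.sqrt 3 ≤ 1.8 := by
  have h : Real.sqrt 3 ^ 2 = 3 := Real.sq_sqrt (by norm_num)
  have h0 : 0 ≤ Real.sqrt 3 := Real.sqrt_nonneg 3
  constructor <;> nlinarith

private lemma aux_ub (u c r : ℝ) (hrel : (u - 1) * (2 * c - 2) = 1)
    (hc : (3 + r) / 4 ≤ c) (hr : r ^ 2 = 3) (hr17 : (1.7:ℝ) ≤ r)
    (hu : 0 ≤ u - 1) : u ≤ 2 + r := by
  nlinarith [mul_nonneg hu (show (0:ℝ) ≤ 2 * c - 2 - (r - 1) / 2 by linarith),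
    sq_nonneg (u - 2 - r), hr17, hu]

private lemma aux_lb (v c : ℝ) (hrel : (v - 1) * (2 * c - 2) = 1)
    (hc : c ≤ 1.4) (hc1 : 1 < c) : (9:ℝ)/4 ≤ v := by
  nlinarith [mul_nonneg (show (0:ℝ) ≤ v - 1 by nlinarith) (show (0:ℝ) ≤ 4/5 - (2*c-2) by nlinarith)]

private lemma aux_mono (u v A B : ℝ) (h1 : (u - 1) * A = 1) (h2 : (v - 1) * B = 1)
    (hA : 0 < A) (hAB : A ≤ B) : v ≤ u := by
  have hu : 0 < u - 1 := by nlinarith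
  have hv : 0 < v - 1 := by nlinarith
  nlinarith [mul_pos hu hA, mul_pos hv hA]

private lemma aux_sqle (a b : ℝ) (h : a ^ 2 ≤ b ^ 2) (ha : 0 ≤ a) (hb : 0 ≤ b) :
    a ≤ b := by nlinarith

private lemma aux_P (x y : ℝ) (h32 : (3:ℝ)/2 ≤ y) (hxy : y ≤ x) :
    x * (3 - x) ≤ y * (3 - y) := by nlinarith

private lemma aux_P2 (x : ℝ) (h1 : 1 ≤ x) (h2 : x ≤ 2) : 2 ≤ x * (3 - x) := by
  nlinarith

private lemma aux_q (Pa Pb qa qb : ℝ) (hqa0 : 0 ≤ qa) (hqb0 : 0 ≤ qb)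
    (hqa2 : qa ^ 2 = Pa ^ 2 + 2 * Pa - 8) (hqb2 : qb ^ 2 = Pb ^ 2 + 2 * Pb - 8)
    (h2 : 2 ≤ Pa) (hP : Pa ≤ Pb) : qa ≤ qb := by
  have hsq : qa ^ 2 ≤ qb ^ 2 := by nlinarith
  exact aux_sqle _ _ hsq hqa0 hqb0

private lemma aux_g (u v : ℝ) (h1 : 1 ≤ v) (h : v ≤ u) :
    (4 * u - 3) * (2 * v - 1) ^ 2 ≤ (4 * v - 3) * (2 * u - 1) ^ 2 := by
  nlinarith [mul_nonneg (sub_nonneg.mpr h)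
    (show (0:ℝ) ≤ 4 * u * v - 3 * u - 3 * v + 2 by nlinarith)]

private lemma aux_pos (K w : ℝ) (hK : 2 ≤ K) (hw1 : (9:ℝ)/4 ≤ w)
    (hw2 : w ≤ (19:ℝ)/5) : 0 < K ^ 2 * (4 * w - 3) - (2 * w - 1) ^ 2 := by
  nlinarith [mul_nonneg (sub_nonneg.mpr hw1) (sub_nonneg.mpr hw2)]

private lemma aux_cancel (a b : ℝ) (h : 0 < a * b) (hb : 0 < b) : 0 < a := by
  by_contra hc
  push_neg at hc
  nlinarith

set_option maxHeartbeats 1000000 in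
/-- Lemma 3.3 of the paper: the quantity E of equation (6) is decreasing in ℓ₁
on the interval (3+√3)/4 ≤ cosh ℓ₁ ≤ 1.4. -/
theorem stmt_6 (ℓa ℓb Ra Rb Sa Sb Ea Eb : ℝ)
    (hℓa : 0 < ℓa) (hℓb : 0 < ℓb) (hab : ℓa < ℓb)
    (h1 : (3 + Real.sqrt 3) / 4 ≤ Real.cosh ℓa) (h2 : Real.cosh ℓb ≤ 1.4)
    (hRa0 : 0 ≤ Ra)
    (hRa : Real.cosh Ra = Real.sqrt (1 + 1 / (2 * Real.cosh ℓa - 2)))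
    (hSa0 : 0 ≤ Sa) (hSa : Real.cosh Sa = 3 - Real.cosh Ra)
    (hEa0 : 0 ≤ Ea)
    (hEa : Real.cosh Ea
      = 2 / (Real.cosh (Ra + Sa) ^ 2 * Real.tanh ℓa ^ 2 - 1) + 1)
    (hRb0 : 0 ≤ Rb)
    (hRb : Real.cosh Rb = Real.sqrt (1 + 1 / (2 * Real.cosh ℓb - 2)))
    (hSb0 : 0 ≤ Sb) (hSb : Real.cosh Sb = 3 - Real.cosh Rb)
    (hEb0 : 0 ≤ Eb)
    (hEb : Real.cosh Eb
      = 2 / (Real.cosh (Rb + Sb) ^ 2 * Real.tanh ℓb ^ 2 - 1) + 1) :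
    Eb ≤ Ea := by
  obtain ⟨s3l, s3u⟩ := aux_sqrt3
  have s3 : Real.sqrt 3 ^ 2 = 3 := Real.sq_sqrt (by norm_num)
  set ca := Real.cosh ℓa with hcadef
  set cb := Real.cosh ℓb with hcbdef
  have hca1 : 1 < ca := by linarith
  have hcab : ca < cb := by
    rw [hcadef, hcbdef, Real.cosh_lt_cosh, abs_of_pos hℓa, abs_of_pos hℓb]
    exact hab
  have hcb1 : 1 < cb := lt_trans hca1 hcab
  have h2ca : 0 < 2 * ca - 2 := by linarith
  have h2cb : 0 < 2 * cb - 2 := by linarith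
  set s := Real.cosh Ra with hsdef
  set t := Real.cosh Rb with htdef
  have hs1 : 1 ≤ s := Real.one_le_cosh Ra
  have ht1 : 1 ≤ t := Real.one_le_cosh Rb
  have hs2le : s ≤ 2 := by have := Real.one_le_cosh Sa; rw [hSa] at this; linarith
  have ht2le : t ≤ 2 := by have := Real.one_le_cosh Sb; rw [hSb] at this; linarith
  have hsq : s ^ 2 = 1 + 1 / (2 * ca - 2) := by
    rw [hRa]
    exact Real.sq_sqrt (by have := one_div_pos.mpr h2ca; linarith)
  have htq : t ^ 2 = 1 + 1 / (2 * cb - 2) := by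
    rw [hRb]
    exact Real.sq_sqrt (by have := one_div_pos.mpr h2cb; linarith)
  have hrel_a : (s ^ 2 - 1) * (2 * ca - 2) = 1 := by
    rw [hsq, add_sub_cancel_left, one_div_mul_cancel h2ca.ne']
  have hrel_b : (t ^ 2 - 1) * (2 * cb - 2) = 1 := by
    rw [htq, add_sub_cancel_left, one_div_mul_cancel h2cb.ne']
  have hs2gt1 : 1 < s ^ 2 := by
    have h := one_div_pos.mpr h2ca; rw [hsq]; linarith
  have ht2gt1 : 1 < t ^ 2 := by
    have h := one_div_pos.mpr h2cb; rw [htq]; linarith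
  have hsb : s ^ 2 ≤ 2 + Real.sqrt 3 :=
    aux_ub (s ^ 2) ca (Real.sqrt 3) hrel_a h1 s3 s3l (by linarith)
  have ht225 : (9:ℝ)/4 ≤ t ^ 2 := aux_lb (t ^ 2) cb hrel_b h2 hcb1
  have hst : t ^ 2 ≤ s ^ 2 :=
    aux_mono (s ^ 2) (t ^ 2) (2 * ca - 2) (2 * cb - 2) hrel_a hrel_b h2ca
      (by linarith)
  have hts : t ≤ s := aux_sqle t s hst (by linarith) (by linarith)
  have ht32 : (3:ℝ)/2 ≤ t := by
    have h94 : ((3:ℝ)/2) ^ 2 ≤ t ^ 2 := by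
      rw [show ((3:ℝ)/2) ^ 2 = 9/4 by norm_num]; exact ht225
    exact aux_sqle (3/2) t h94 (by norm_num) (by linarith)
  -- sinh data
  have hpa0 : 0 ≤ Real.sinh Ra := Real.sinh_nonneg_iff.mpr hRa0
  have hpb0 : 0 ≤ Real.sinh Rb := Real.sinh_nonneg_iff.mpr hRb0
  have hσa0 : 0 ≤ Real.sinh Sa := Real.sinh_nonneg_iff.mpr hSa0
  have hσb0 : 0 ≤ Real.sinh Sb := Real.sinh_nonneg_iff.mpr hSb0
  have hpa2 : Real.sinh Ra ^ 2 = s ^ 2 - 1 := by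
    have := Real.cosh_sq Ra; rw [← hsdef] at this; linarith
  have hpb2 : Real.sinh Rb ^ 2 = t ^ 2 - 1 := by
    have := Real.cosh_sq Rb; rw [← htdef] at this; linarith
  have hσa2 : Real.sinh Sa ^ 2 = (3 - s) ^ 2 - 1 := by
    have := Real.cosh_sq Sa; rw [hSa] at this; linarith
  have hσb2 : Real.sinh Sb ^ 2 = (3 - t) ^ 2 - 1 := by
    have := Real.cosh_sq Sb; rw [hSb] at this; linarith
  set qa := Real.sinh Ra * Real.sinh Sa with hqadef
  set qb := Real.sinh Rb * Real.sinh Sb with hqbdef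
  have hqa0 : 0 ≤ qa := mul_nonneg hpa0 hσa0
  have hqb0 : 0 ≤ qb := mul_nonneg hpb0 hσb0
  have hqa2 : qa ^ 2 = (s * (3 - s)) ^ 2 + 2 * (s * (3 - s)) - 8 := by
    rw [hqadef, mul_pow, hpa2, hσa2]; ring
  have hqb2 : qb ^ 2 = (t * (3 - t)) ^ 2 + 2 * (t * (3 - t)) - 8 := by
    rw [hqbdef, mul_pow, hpb2, hσb2]; ring
  have hcosh_a : Real.cosh (Ra + Sa) = s * (3 - s) + qa := by
    rw [Real.cosh_add, hSa, ← hsdef, hqadef]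
  have hcosh_b : Real.cosh (Rb + Sb) = t * (3 - t) + qb := by
    rw [Real.cosh_add, hSb, ← htdef, hqbdef]
  -- tanh
  have hta : Real.tanh ℓa ^ 2 * ca ^ 2 = ca ^ 2 - 1 := by
    have hsi : Real.sinh ℓa ^ 2 = ca ^ 2 - 1 := by
      have := Real.cosh_sq ℓa; rw [← hcadef] at this; linarith
    rw [Real.tanh_eq_sinh_div_cosh, div_pow, ← hcadef,
      div_mul_cancel₀ _ (by positivity : ca ^ 2 ≠ 0)]
    exact hsi
  have htb : Real.tanh ℓb ^ 2 * cb ^ 2 = cb ^ 2 - 1 := by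
    have hsi : Real.sinh ℓb ^ 2 = cb ^ 2 - 1 := by
      have := Real.cosh_sq ℓb; rw [← hcbdef] at this; linarith
    rw [Real.tanh_eq_sinh_div_cosh, div_pow, ← hcbdef,
      div_mul_cancel₀ _ (by positivity : cb ^ 2 ≠ 0)]
    exact hsi
  have hlina : ca * (2 * s ^ 2 - 2) = 2 * s ^ 2 - 1 := by linear_combination hrel_a
  have hlinb : cb * (2 * t ^ 2 - 2) = 2 * t ^ 2 - 1 := by linear_combination hrel_b
  have htha : Real.tanh ℓa ^ 2 * (2 * s ^ 2 - 1) ^ 2 = 4 * s ^ 2 - 3 := by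
    linear_combination (2 * s ^ 2 - 2) ^ 2 * hta
      + (2 * s ^ 2 - 1 + ca * (2 * s ^ 2 - 2)) * (1 - Real.tanh ℓa ^ 2) * hlina
  have hthb : Real.tanh ℓb ^ 2 * (2 * t ^ 2 - 1) ^ 2 = 4 * t ^ 2 - 3 := by
    linear_combination (2 * t ^ 2 - 2) ^ 2 * htb
      + (2 * t ^ 2 - 1 + cb * (2 * t ^ 2 - 2)) * (1 - Real.tanh ℓb ^ 2) * hlinb
  -- monotonicity of K
  have hPab : s * (3 - s) ≤ t * (3 - t) := aux_P s t ht32 hts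
  have hPa2 : 2 ≤ s * (3 - s) := aux_P2 s hs1 hs2le
  have hPb2 : 2 ≤ t * (3 - t) := aux_P2 t ht1 ht2le
  have hKa2 : 2 ≤ s * (3 - s) + qa := by linarith
  have hqab : qa ≤ qb := aux_q _ _ _ _ hqa0 hqb0 hqa2 hqb2 hPa2 hPab
  have hKab : s * (3 - s) + qa ≤ t * (3 - t) + qb := by linarith
  have hKsq : (s * (3 - s) + qa) ^ 2 ≤ (t * (3 - t) + qb) ^ 2 :=
    pow_le_pow_left₀ (by linarith) hKab 2
  have hg : (4 * s ^ 2 - 3) * (2 * t ^ 2 - 1) ^ 2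
      ≤ (4 * t ^ 2 - 3) * (2 * s ^ 2 - 1) ^ 2 :=
    aux_g (s ^ 2) (t ^ 2) (by linarith) hst
  have hBnn : (0:ℝ) ≤ (4 * s ^ 2 - 3) * (2 * t ^ 2 - 1) ^ 2 :=
    mul_nonneg (by linarith) (sq_nonneg _)
  have hmain : (s * (3 - s) + qa) ^ 2 * ((4 * s ^ 2 - 3) * (2 * t ^ 2 - 1) ^ 2)
      ≤ (t * (3 - t) + qb) ^ 2 * ((4 * t ^ 2 - 3) * (2 * s ^ 2 - 1) ^ 2) :=
    mul_le_mul hKsq hg hBnn (sq_nonneg _)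
  set Da := Real.cosh (Ra + Sa) ^ 2 * Real.tanh ℓa ^ 2 - 1 with hDadef
  set Db := Real.cosh (Rb + Sb) ^ 2 * Real.tanh ℓb ^ 2 - 1 with hDbdef
  have hDa_eq : Da * (2 * s ^ 2 - 1) ^ 2
      = (s * (3 - s) + qa) ^ 2 * (4 * s ^ 2 - 3) - (2 * s ^ 2 - 1) ^ 2 := by
    rw [hDadef, hcosh_a]
    linear_combination (s * (3 - s) + qa) ^ 2 * htha
  have hDb_eq : Db * (2 * t ^ 2 - 1) ^ 2
      = (t * (3 - t) + qb) ^ 2 * (4 * t ^ 2 - 3) - (2 * t ^ 2 - 1) ^ 2 := by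
    rw [hDbdef, hcosh_b]
    linear_combination (t * (3 - t) + qb) ^ 2 * hthb
  have hposS : (0:ℝ) < (2 * s ^ 2 - 1) ^ 2 := pow_pos (by linarith) 2
  have hposT : (0:ℝ) < (2 * t ^ 2 - 1) ^ 2 := pow_pos (by linarith) 2
  have e1 : Da * ((2 * s ^ 2 - 1) ^ 2 * (2 * t ^ 2 - 1) ^ 2)
      = ((s * (3 - s) + qa) ^ 2 * (4 * s ^ 2 - 3) - (2 * s ^ 2 - 1) ^ 2)
        * (2 * t ^ 2 - 1) ^ 2 := by
    linear_combination (2 * t ^ 2 - 1) ^ 2 * hDa_eq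
  have e2 : Db * ((2 * s ^ 2 - 1) ^ 2 * (2 * t ^ 2 - 1) ^ 2)
      = ((t * (3 - t) + qb) ^ 2 * (4 * t ^ 2 - 3) - (2 * t ^ 2 - 1) ^ 2)
        * (2 * s ^ 2 - 1) ^ 2 := by
    linear_combination (2 * s ^ 2 - 1) ^ 2 * hDb_eq
  have key : Da * ((2 * s ^ 2 - 1) ^ 2 * (2 * t ^ 2 - 1) ^ 2)
      ≤ Db * ((2 * s ^ 2 - 1) ^ 2 * (2 * t ^ 2 - 1) ^ 2) := by
    rw [e1, e2]; linarith [hmain]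
  have hDab : Da ≤ Db := le_of_mul_le_mul_right key (mul_pos hposS hposT)
  -- positivity of Da
  have hs225 : (9:ℝ)/4 ≤ s ^ 2 := le_trans ht225 hst
  have hDapos' : 0 < Da * (2 * s ^ 2 - 1) ^ 2 := by
    rw [hDa_eq]
    exact aux_pos _ _ hKa2 hs225 (by linarith)
  have hDa_pos : 0 < Da := aux_cancel _ _ hDapos' hposS
  have hDb_pos : 0 < Db := lt_of_lt_of_le hDa_pos hDab
  have hdiv : 2 / Db ≤ 2 / Da :=
    div_le_div_of_nonneg_left (by norm_num) hDa_pos hDab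
  have hch : Real.cosh Eb ≤ Real.cosh Ea := by
    rw [hEa, hEb]; linarith
  have habs := Real.cosh_le_cosh.mp hch
  rwa [abs_of_nonneg hEb0, abs_of_nonneg hEa0] at habs
end

section
/- Let ℓ > 0 be a real number with (3+√3)/4 ≤ cosh ℓ ≤ 1.215. Let R, S, E, F, A be nonnegative reals defined by cosh R = √(1 + 1/(2·cosh ℓ − 2)), cosh S = 3 − cosh R, cosh E = 2/(cosh²(R + S)·tanh²ℓ − 1) + 1, cosh F = √((cosh ℓ + 1)/(cosh(2S) − 1) + 1), and cosh A = √((2/3)(cosh ℓ + 1)). Then min(E, F) > 2ℓ and min(E, F) > 2A. (This is the real-analytic content of Lemma 3.5 of the paper: if cosh ℓ₁ ≤ 1.215, then ℓ₁ and A are each less than ℓ₂/2, since ℓ₂ ≥ min{E, F}.) -/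
private lemma polyA2 (r pq : ℝ) (h1 : 18236/10000 ≤ r) (h2 : r ≤ 19437/10000)
    (hpq0 : 0 ≤ pq) (hpq : pq^2 = (r^2-1)*(r^2-6*r+8)) :
    pq*r < r^3-r^2-1 := by
  nlinarith [sq_nonneg (r - 18236/10000), sq_nonneg (r - 19437/10000), sq_nonneg pq,
    sq_nonneg (pq*r), sq_nonneg (r^3-r^2-1 - pq*r),
    mul_nonneg hpq0 (le_trans (by norm_num) h1)]

private lemma polyA1 (r pq : ℝ) (h1 : 18236/10000 ≤ r) (h2 : r ≤ 19437/10000)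
    (hpq0 : 0 ≤ pq) (hpq : pq^2 = (r^2-1)*(r^2-6*r+8)) :
    pq*(4*r^2-3) < 8*r^4-12*r^3-7*r^2+9*r+1 := by
  nlinarith [sq_nonneg (r - 18236/10000), sq_nonneg (r - 19437/10000), sq_nonneg pq,
    sq_nonneg (pq*(4*r^2-3)), mul_nonneg hpq0 (le_trans (by norm_num) h1)]

private lemma lem_sqrt3 : (1.72:ℝ) ≤ Real.sqrt 3 := by
  nlinarith [Real.sq_sqrt (by norm_num : (3:ℝ) ≥ 0), Real.sqrt_nonneg 3]

private lemma lem_h2r2 (x r : ℝ) (h2x2 : 0 < 2*x-2) (hr2 : r^2 = 1 + 1/(2*x-2)) :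
    0 < 2*r^2-2 := by
  have := one_div_pos.mpr h2x2
  nlinarith [hr2]

private lemma lem_rbounds (x r : ℝ) (hx_lb : (1.18:ℝ) ≤ x) (hx_ub : x ≤ 1.215)
    (hr1 : 1 ≤ r) (h2r2 : 0 < 2*r^2-2) (hrx : x*(2*r^2-2) = 2*r^2-1) :
    18236/10000 ≤ r ∧ r ≤ 19437/10000 := by
  have hr2_lb : (143:ℝ)/43 ≤ r^2 := by
    nlinarith [mul_nonneg (sub_nonneg.mpr hx_ub) h2r2.le, hrx]
  have hr2_ub : r^2 ≤ 34/9 := by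
    nlinarith [mul_nonneg (sub_nonneg.mpr hx_lb) h2r2.le, hrx]
  constructor
  · nlinarith [hr2_lb, hr1]
  · nlinarith [hr2_ub, hr1]

private lemma lem_key1 (x r c pq : ℝ)
    (hrx : x*(2*r^2-2) = 2*r^2-1) (h2r2 : 0 < 2*r^2-2)
    (hr_lb : 18236/10000 ≤ r) (hr_ub : r ≤ 19437/10000)
    (hpq0 : 0 ≤ pq) (hpq : pq^2 = (r^2-1)*(r^2-6*r+8))
    (hc : c = r*(3-r) + pq) :
    c*(x^2-1) < x^2 := by
  have hA1 := polyA1 r pq hr_lb hr_ub hpq0 hpq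
  have hsq2 : (0:ℝ) < (2*r^2-2)^2 := by positivity
  have h' : (c*(x^2-1))*(2*r^2-2)^2 < x^2*(2*r^2-2)^2 := by
    have lhs_eq : (c*(x^2-1))*(2*r^2-2)^2 = c*(4*r^2-3) := by
      linear_combination c*(x*(2*r^2-2) + (2*r^2-1))*hrx
    have rhs_eq : x^2*(2*r^2-2)^2 = (2*r^2-1)^2 := by
      linear_combination (x*(2*r^2-2) + (2*r^2-1))*hrx
    rw [lhs_eq, rhs_eq]
    nlinarith [hA1, hc]
  exact (mul_lt_mul_iff_of_pos_right hsq2).mp h'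

private lemma lem_key2 (x r c pq : ℝ)
    (hrx : x*(2*r^2-2) = 2*r^2-1) (h2r2 : 0 < 2*r^2-2)
    (hr_lb : 18236/10000 ≤ r) (hr_ub : r ≤ 19437/10000)
    (hpq0 : 0 ≤ pq) (hpq : pq^2 = (r^2-1)*(r^2-6*r+8))
    (hc : c = r*(3-r) + pq) (hc0 : 0 < c) :
    c^2*(x-1)*(2*x-1) < 2*x^2 := by
  have hA2 := polyA2 r pq hr_lb hr_ub hpq0 hpq
  have hsq2 : (0:ℝ) < (2*r^2-2)^2 := by positivity
  have e6 : (c*r)^2 < (2*r^2-1)^2 := by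
    have hcr : c*r < 2*r^2-1 := by nlinarith [hA2, hc]
    nlinarith [hcr, mul_nonneg hc0.le (by linarith : (0:ℝ) ≤ r), h2r2]
  have h' : (c^2*(x-1)*(2*x-1))*(2*r^2-2)^2 < (2*x^2)*(2*r^2-2)^2 := by
    have e4 : (x-1)*(2*r^2-2) = 1 := by linear_combination hrx
    have e5 : (2*x-1)*(2*r^2-2) = 2*r^2 := by linear_combination 2*hrx
    have lhs_eq : (c^2*(x-1)*(2*x-1))*(2*r^2-2)^2 = 2*(c*r)^2 := by
      linear_combination (c^2*((2*x-1)*(2*r^2-2)))*e4 + c^2*e5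
    have rhs_eq : (2*x^2)*(2*r^2-2)^2 = 2*(2*r^2-1)^2 := by
      linear_combination (2*(x*(2*r^2-2) + (2*r^2-1)))*hrx
    rw [lhs_eq, rhs_eq]; linarith [e6]
  exact (mul_lt_mul_iff_of_pos_right hsq2).mp h'

private lemma lem_clb (r c pq : ℝ)
    (hr_lb : 18236/10000 ≤ r) (hr_ub : r ≤ 19437/10000)
    (hpq0 : 0 ≤ pq) (hc : c = r*(3-r) + pq) : (2.05:ℝ) ≤ c := by
  nlinarith [hc, hpq0, mul_nonneg (sub_nonneg.mpr hr_lb) (sub_nonneg.mpr hr_ub)]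

private lemma lem_numpos (x c : ℝ) (hx_lb : (1.18:ℝ) ≤ x) (hc_lb : (2.05:ℝ) ≤ c) :
    0 < c^2*(x^2-1) - x^2 := by
  have h1 : 0 ≤ (c^2 - 4.2025)*(x^2-1) :=
    mul_nonneg (by nlinarith [hc_lb]) (by nlinarith [hx_lb])
  nlinarith [h1, sq_nonneg (x-1.18), hx_lb]

private lemma lem_E1 (x c : ℝ) (hx1 : 1 < x) (hc0 : 0 < c)
    (hnum : 0 < c^2*(x^2-1) - x^2) (key1 : c*(x^2-1) < x^2) :
    2*x^2-2 < 2*x^2/(c^2*(x^2-1) - x^2) := by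
  rw [lt_div_iff₀ hnum]
  nlinarith [key1, mul_nonneg hc0.le (by nlinarith : (0:ℝ) ≤ x^2-1)]

private lemma lem_E2 (x c : ℝ) (hx1 : 1 < x) (hc0 : 0 < c)
    (hnum : 0 < c^2*(x^2-1) - x^2) (key2 : c^2*(x-1)*(2*x-1) < 2*x^2) :
    (4*x-2)/3 < 2*x^2/(c^2*(x^2-1) - x^2) := by
  rw [lt_div_iff₀ hnum]
  nlinarith [key2, hx1, mul_pos (mul_pos (mul_pos hc0 hc0)
    (show (0:ℝ) < x-1 by linarith)) (show (0:ℝ) < 2*x-1 by linarith)]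

private lemma lem_q2ub (r q : ℝ) (hr_lb : 18236/10000 ≤ r) (hr_ub : r ≤ 19437/10000)
    (hq2 : q^2 = r^2 - 6*r + 8) : q^2 ≤ 0.3840 := by
  nlinarith [mul_nonneg (sub_nonneg.mpr hr_lb)
    (show (0:ℝ) ≤ 6 - r - 18236/10000 by linarith)]

private lemma lem_F1 (x q : ℝ) (hx_lb : (1.18:ℝ) ≤ x) (hx_ub : x ≤ 1.215)
    (hq2pos : 0 < q^2) (q2_ub : q^2 ≤ 0.3840) :
    (2*x^2-1)^2 < (x+1)/(2*q^2) + 1 := by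
  have h'' : ((2*x^2-1)^2-1)*(2*q^2) < x+1 := by
    have hx2 : x^2 ≤ 1.476225 := by nlinarith [hx_ub, hx_lb]
    have hg : 8*x^2*(x^2-1) ≤ 5.63 := by
      nlinarith [mul_le_mul hx2 (show x^2-1 ≤ 0.476225 by linarith)
        (by nlinarith [hx_lb] : (0:ℝ) ≤ x^2-1) (by norm_num : (0:ℝ) ≤ 1.476225)]
    have hgn : (0:ℝ) ≤ 8*x^2*(x^2-1) := by nlinarith [hx_lb, sq_nonneg x]
    nlinarith [mul_le_mul q2_ub hg hgn (by norm_num : (0:ℝ) ≤ 0.3840), hx_lb]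
  have := (lt_div_iff₀ (by positivity : (0:ℝ) < 2*q^2)).mpr h''
  linarith

private lemma lem_F2 (x q : ℝ) (hx_lb : (1.18:ℝ) ≤ x) (hx_ub : x ≤ 1.215)
    (hq2pos : 0 < q^2) (q2_ub : q^2 ≤ 0.3840) :
    ((4*x+1)/3)^2 < (x+1)/(2*q^2) + 1 := by
  have h'' : (((4*x+1)/3)^2-1)*(2*q^2) < x+1 := by
    have hx2 : x^2 ≤ 1.476225 := by nlinarith [hx_ub, hx_lb]
    have hg : (32*x^2+16*x-16)/9 ≤ 5.64 := by nlinarith [hx2, hx_ub]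
    have hgn : (0:ℝ) ≤ (32*x^2+16*x-16)/9 := by nlinarith [hx_lb, sq_nonneg (x-1.18)]
    nlinarith [mul_le_mul q2_ub hg hgn (by norm_num : (0:ℝ) ≤ 0.3840), hx_lb]
  have := (lt_div_iff₀ (by positivity : (0:ℝ) < 2*q^2)).mpr h''
  linarith

private lemma lem_sq_lt (a b : ℝ) (ha : 1 ≤ a) (hb : 1 ≤ b) (h : a^2 < b^2) : a < b := by
  nlinarith [h, ha, hb]

/-- Real-analytic content of Lemma 3.5 of the paper: if cosh ℓ₁ ≤ 1.215, then
ℓ₁ and A are each less than ℓ₂/2, since ℓ₂ ≥ min{E, F}. -/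
theorem stmt_7 (ℓ R S E F A : ℝ) (hℓ : 0 < ℓ)
    (h1 : (3 + Real.sqrt 3) / 4 ≤ Real.cosh ℓ) (h2 : Real.cosh ℓ ≤ 1.215)
    (hR0 : 0 ≤ R)
    (hR : Real.cosh R = Real.sqrt (1 + 1 / (2 * Real.cosh ℓ - 2)))
    (hS0 : 0 ≤ S) (hS : Real.cosh S = 3 - Real.cosh R)
    (hE0 : 0 ≤ E)
    (hE : Real.cosh E = 2 / (Real.cosh (R + S) ^ 2 * Real.tanh ℓ ^ 2 - 1) + 1)
    (hF0 : 0 ≤ F)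
    (hF : Real.cosh F
      = Real.sqrt ((Real.cosh ℓ + 1) / (Real.cosh (2 * S) - 1) + 1))
    (hA0 : 0 ≤ A)
    (hA : Real.cosh A = Real.sqrt ((2 / 3) * (Real.cosh ℓ + 1))) :
    min E F > 2 * ℓ ∧ min E F > 2 * A := by
  set x := Real.cosh ℓ with hxdef
  set r := Real.cosh R with hrdef
  set p := Real.sinh R with hpdef
  set q := Real.sinh S with hqdef
  have hx_lb : (1.18:ℝ) ≤ x := by
    have h3 := lem_sqrt3; linarith
  have hx_ub : x ≤ 1.215 := h2
  have hx1 : (1:ℝ) < x := by norm_num at hx_lb ⊢; linarith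
  have h2x2 : (0:ℝ) < 2*x - 2 := by linarith
  have hx0 : (0:ℝ) < x := by linarith
  have hr2 : r^2 = 1 + 1/(2*x-2) := by
    rw [hR]; exact Real.sq_sqrt (by positivity)
  have hrx : x*(2*r^2-2) = 2*r^2-1 := by
    rw [hr2]; linear_combination (mul_one_div_cancel h2x2.ne')
  have hr1 : (1:ℝ) ≤ r := Real.one_le_cosh R
  have h2r2 : (0:ℝ) < 2*r^2-2 := lem_h2r2 x r h2x2 hr2
  obtain ⟨hr_lb, hr_ub⟩ := lem_rbounds x r hx_lb hx_ub hr1 h2r2 hrx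
  have hp0 : 0 ≤ p := Real.sinh_nonneg_iff.mpr hR0
  have hq0 : 0 ≤ q := Real.sinh_nonneg_iff.mpr hS0
  have hp2 : p^2 = r^2 - 1 := Real.sinh_sq R
  have hq2 : q^2 = r^2 - 6*r + 8 := by
    have h := Real.sinh_sq S
    rw [hS] at h; rw [hqdef, h]; ring
  have hpq2 : (p*q)^2 = (r^2-1)*(r^2-6*r+8) := by rw [mul_pow, hp2, hq2]
  have hpq0 : 0 ≤ p*q := mul_nonneg hp0 hq0
  set c := Real.cosh (R+S) with hcdef
  have hc : c = r*(3-r) + p*q := by rw [hcdef, Real.cosh_add, hS]; try ring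
  have hc0 : (0:ℝ) < c := lt_of_lt_of_le one_pos (Real.one_le_cosh _)
  have key1 := lem_key1 x r c (p*q) hrx h2r2 hr_lb hr_ub hpq0 hpq2 hc
  have key2 := lem_key2 x r c (p*q) hrx h2r2 hr_lb hr_ub hpq0 hpq2 hc hc0
  have hc_lb := lem_clb r c (p*q) hr_lb hr_ub hpq0 hc
  have hnum : (0:ℝ) < c^2*(x^2-1) - x^2 := lem_numpos x c hx_lb hc_lb
  have ht2 : Real.tanh ℓ ^2 = (x^2-1)/x^2 := by
    rw [Real.tanh_eq_sinh_div_cosh, div_pow, Real.sinh_sq]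
  have hEeq : Real.cosh E = 2*x^2/(c^2*(x^2-1) - x^2) + 1 := by
    rw [hE, ht2]
    have hd : c^2*((x^2-1)/x^2) - 1 = (c^2*(x^2-1) - x^2)/x^2 := by
      field_simp
    rw [hd, div_div_eq_mul_div]
  have hcosh2l : Real.cosh (2*ℓ) = 2*x^2 - 1 := by
    rw [Real.cosh_two_mul, Real.sinh_sq]; ring
  have hE2l : Real.cosh (2*ℓ) < Real.cosh E := by
    rw [hcosh2l, hEeq]
    have := lem_E1 x c hx1 hc0 hnum key1
    linarith
  have hcA2 : Real.cosh A^2 = 2/3*(x+1) := by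
    rw [hA]; exact Real.sq_sqrt (by positivity)
  have hcosh2A : Real.cosh (2*A) = (4*x+1)/3 := by
    rw [Real.cosh_two_mul, Real.sinh_sq, hcA2]; ring
  have hE2A : Real.cosh (2*A) < Real.cosh E := by
    rw [hcosh2A, hEeq]
    have := lem_E2 x c hx1 hc0 hnum key2
    linarith
  have hq2pos : (0:ℝ) < q^2 := by
    rw [hq2]; clear * - hr_ub hr_lb; nlinarith [hr_ub, hr_lb]
  have hcosh2S : Real.cosh (2*S) - 1 = 2*q^2 := by
    rw [Real.cosh_two_mul, Real.cosh_sq]; ring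
  have hF2 : Real.cosh F^2 = (x+1)/(2*q^2) + 1 := by
    have h2S : Real.cosh (2*S) - 1 = 2*q^2 := hcosh2S
    rw [hF]
    rw [show (x + 1) / (Real.cosh (2*S) - 1) + 1 = (x+1)/(2*q^2) + 1 by rw [h2S]]
    exact Real.sq_sqrt (by positivity)
  have q2_ub := lem_q2ub r q hr_lb hr_ub hq2
  have hF2l : Real.cosh (2*ℓ) < Real.cosh F := by
    have h' := lem_F1 x q hx_lb hx_ub hq2pos q2_ub
    rw [← hF2] at h'
    rw [hcosh2l]
    have hxsq : (1:ℝ)^2 ≤ x^2 := pow_le_pow_left₀ (by norm_num) hx1.le 2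
    exact lem_sq_lt _ _ (by linarith) (Real.one_le_cosh F) h'
  have hF2A : Real.cosh (2*A) < Real.cosh F := by
    have h' := lem_F2 x q hx_lb hx_ub hq2pos q2_ub
    rw [← hF2] at h'
    rw [hcosh2A]
    exact lem_sq_lt _ _ (by linarith) (Real.one_le_cosh F) h'
  have habs : ∀ a b : ℝ, 0 ≤ a → 0 ≤ b → Real.cosh a < Real.cosh b → a < b := by
    intro a b ha hb hab
    have := Real.cosh_lt_cosh.mp hab
    rwa [abs_of_nonneg ha, abs_of_nonneg hb] at this
  have hA0' : (0:ℝ) ≤ 2*A := by linarith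
  have hl0' : (0:ℝ) ≤ 2*ℓ := by linarith
  exact ⟨lt_min (habs _ _ hl0' hE0 hE2l) (habs _ _ hl0' hF0 hF2l),
         lt_min (habs _ _ hA0' hE0 hE2A) (habs _ _ hA0' hF0 hF2A)⟩
end

section
/- Let ℓ > 0 be a real number. Then (cosh²ℓ + cosh(2ℓ)) / sinh²ℓ = 3 + 2/sinh²ℓ; moreover, if (cosh²ℓ + cosh(2ℓ)) / sinh²ℓ ≤ 3 + 2√3, then sinh²ℓ ≥ 1/√3 and cosh ℓ > 1.255. (This is the computational core of Proposition 3.7: if a manifold has no (1,1,1) hexagon, then cosh d₁₁ ≥ (cosh²ℓ₁ + cosh 2ℓ₁)/sinh²ℓ₁ = 3 + 2/sinh²ℓ₁, and combined with cosh d₁₁ ≤ 3 + 2√3 this forces cosh ℓ₁ > 1.255.) -/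
/-- Computational core of Proposition 3.7: (cosh²ℓ + cosh 2ℓ)/sinh²ℓ = 3 + 2/sinh²ℓ,
and if this quantity is at most 3 + 2√3 then sinh²ℓ ≥ 1/√3 and cosh ℓ > 1.255. -/
theorem stmt_8 (ℓ : ℝ) (hℓ : 0 < ℓ) :
    (Real.cosh ℓ ^ 2 + Real.cosh (2 * ℓ)) / Real.sinh ℓ ^ 2
        = 3 + 2 / Real.sinh ℓ ^ 2 ∧
      ((Real.cosh ℓ ^ 2 + Real.cosh (2 * ℓ)) / Real.sinh ℓ ^ 2
          ≤ 3 + 2 * Real.sqrt 3 →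
        Real.sinh ℓ ^ 2 ≥ 1 / Real.sqrt 3 ∧ Real.cosh ℓ > 1.255) := by
  have hs : 0 < Real.sinh ℓ := by have := Real.sinh_lt_cosh ℓ; simpa using Real.sinh_pos_iff.mpr hℓ
  have hs2 : 0 < Real.sinh ℓ ^ 2 := by positivity
  have hpyth : Real.cosh ℓ ^ 2 = 1 + Real.sinh ℓ ^ 2 := by
    have := Real.cosh_sq_sub_sinh_sq ℓ; nlinarith
  have heq : (Real.cosh ℓ ^ 2 + Real.cosh (2 * ℓ)) / Real.sinh ℓ ^ 2
      = 3 + 2 / Real.sinh ℓ ^ 2 := by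
    rw [Real.cosh_two_mul]
    field_simp
    nlinarith
  refine ⟨heq, fun h => ?_⟩
  rw [heq] at h
  have h3 : 0 < Real.sqrt 3 := by positivity
  have h1 : 2 / Real.sinh ℓ ^ 2 ≤ 2 * Real.sqrt 3 := by linarith
  have hge : Real.sinh ℓ ^ 2 ≥ 1 / Real.sqrt 3 := by
    rw [ge_iff_le, div_le_iff₀ h3]
    rw [div_le_iff₀ hs2] at h1
    nlinarith
  refine ⟨hge, ?_⟩
  have hsq3 : Real.sqrt 3 < 1.7321 := by
    rw [show (1.7321 : ℝ) = Real.sqrt (1.7321^2) by rw [Real.sqrt_sq]; norm_num]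
    exact Real.sqrt_lt_sqrt (by norm_num) (by norm_num)
  have hcosh2 : Real.cosh ℓ ^ 2 > 1.255 ^ 2 := by
    rw [hpyth]
    have : (1 : ℝ) / Real.sqrt 3 > 0.5771 := by
      rw [gt_iff_lt, lt_div_iff₀ h3]; nlinarith
    nlinarith
  have hc : 0 < Real.cosh ℓ := Real.cosh_pos ℓ
  nlinarith
end

section
/- Define V : ℝ → ℝ by V(ℓ) = π·[ℓ + 2·sinh ℓ + √((2·cosh ℓ − 1)/(2·cosh ℓ − 2))·(log(w + √(w² − 1)) − ℓ − sinh ℓ)], where w = (4·cosh ℓ + 1)/3 (so that log(w + √(w²−1)) = arcosh((4 cosh ℓ + 1)/3)). Then V is strictly increasing on the set {ℓ > 0 : cosh ℓ ≥ 1.439}. (This is the monotonicity claim established in the proof of Proposition 3.1: the volume of the union of the muffin and a collar of height ℓ₁/2 is increasing in ℓ₁ for cosh ℓ₁ ≥ 1.439.) -/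
/-- The volume of the union of the muffin and a collar of height ℓ₁/2, as a
function of ℓ₁ (proof of Proposition 3.1). -/
noncomputable def muffinCollarVol (ℓ : ℝ) : ℝ :=
  Real.pi * (ℓ + 2 * Real.sinh ℓ
    + Real.sqrt ((2 * Real.cosh ℓ - 1) / (2 * Real.cosh ℓ - 2))
      * (Real.log ((4 * Real.cosh ℓ + 1) / 3
          + Real.sqrt (((4 * Real.cosh ℓ + 1) / 3) ^ 2 - 1)) - ℓ - Real.sinh ℓ))

open Real in
set_option maxHeartbeats 1000000 in
lemma key (x : ℝ) (hx : 0 < x) (hc : 1.439 ≤ Real.cosh x) :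
    ∃ d, HasDerivAt muffinCollarVol d x ∧ 0 < d := by
  rw [show (1.439:ℝ) = 1439/1000 by norm_num] at hc
  have hc1 : (1:ℝ) < cosh x := by linarith
  have hs : 0 < sinh x := sinh_pos_iff.mpr hx
  have h2c2 : (0:ℝ) < 2 * cosh x - 2 := by linarith
  have h2c1 : (0:ℝ) < 2 * cosh x - 1 := by linarith
  have hu : 0 < (2 * cosh x - 1) / (2 * cosh x - 2) := div_pos h2c1 h2c2
  have hw : (1:ℝ) < (4 * cosh x + 1) / 3 := by linarith
  have hq : (0:ℝ) < ((4 * cosh x + 1) / 3) ^ 2 - 1 := by nlinarith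
  have hden : (0:ℝ) < (4 * cosh x + 1) / 3 + Real.sqrt (((4 * cosh x + 1) / 3) ^ 2 - 1) := by
    have := Real.sqrt_nonneg (((4 * cosh x + 1) / 3) ^ 2 - 1); linarith
  have hcosh : HasDerivAt Real.cosh (Real.sinh x) x := Real.hasDerivAt_cosh x
  have hsinh : HasDerivAt Real.sinh (Real.cosh x) x := Real.hasDerivAt_sinh x
  have hU : HasDerivAt (fun ℓ => (2 * Real.cosh ℓ - 1) / (2 * Real.cosh ℓ - 2))
      ((2 * sinh x * (2 * cosh x - 2) - (2 * cosh x - 1) * (2 * sinh x)) / (2 * cosh x - 2) ^ 2)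
      x := ((hcosh.const_mul 2).sub_const 1).div ((hcosh.const_mul 2).sub_const 2) h2c2.ne'
  have hF := hU.sqrt hu.ne'
  have hW : HasDerivAt (fun ℓ => (4 * Real.cosh ℓ + 1) / 3) (4 * sinh x / 3) x :=
    ((hcosh.const_mul 4).add_const 1).div_const 3
  have hQ := (hW.pow 2).sub_const 1
  have hR := hQ.sqrt hq.ne'
  have hLog := (hW.add hR).log hden.ne'
  have hG := (hLog.sub (hasDerivAt_id x)).sub hsinh
  have hFG := hF.mul hG
  have hV := (((hasDerivAt_id x).add (hsinh.const_mul 2)).add hFG).const_mul Real.pi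
  refine ⟨_, hV, ?_⟩
  simp only [Pi.add_apply, Pi.sub_apply, Pi.pow_apply, id_eq]
  set c := Real.cosh x with hcdef
  set s := Real.sinh x with hsdef
  set f := Real.sqrt ((2 * c - 1) / (2 * c - 2)) with hfdef
  set r := Real.sqrt (((4 * c + 1) / 3) ^ 2 - 1) with hrdef
  set A := Real.log ((4 * c + 1) / 3 + r) with hAdef
  have hf : 0 < f := Real.sqrt_pos.mpr hu
  have hr : 0 < r := Real.sqrt_pos.mpr hq
  have hfsq : f ^ 2 = (2 * c - 1) / (2 * c - 2) := Real.sq_sqrt hu.le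
  have hrsq : r ^ 2 = ((4 * c + 1) / 3) ^ 2 - 1 := Real.sq_sqrt hq.le
  have hs2 : s ^ 2 = c ^ 2 - 1 := Real.sinh_sq x
  have hf2 : f < 2 := by
    rw [hfdef]
    rw [Real.sqrt_lt' two_pos, div_lt_iff₀ h2c2]
    linarith
  -- key identity : f * (4*s/3) = r
  have hsqeq : (f * (4 * s / 3)) ^ 2 = r ^ 2 := by
    rw [mul_pow, hfsq, hrsq]
    field_simp
    rw [div_eq_iff (sub_ne_zero.mpr hc1.ne')]
    nlinarith [hs2]
  have hfr : f * (4 * s / 3) = r := by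
    have hpos : 0 ≤ f * (4 * s / 3) := by positivity
    calc f * (4 * s / 3) = Real.sqrt ((f * (4 * s / 3)) ^ 2) := (Real.sqrt_sq hpos).symm
    _ = Real.sqrt (r ^ 2) := by rw [hsqeq]
    _ = r := Real.sqrt_sq hr.le
  -- A ≤ x + s
  have hs1 : 1 ≤ s := by nlinarith [hs2]
  have hexps : c + s = Real.exp x := Real.cosh_add_sinh x
  have hexp2 : (1 + s / 2) ^ 2 ≤ Real.exp s := by
    have h := Real.add_one_le_exp (s / 2)
    have h3 : Real.exp (s / 2) * Real.exp (s / 2) = Real.exp s := by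
      rw [← Real.exp_add]; ring_nf
    nlinarith [Real.exp_pos (s / 2)]
  have hrle : r ≤ (4 * c + 1) / 3 := by
    have h1 : r ≤ Real.sqrt (((4 * c + 1) / 3) ^ 2) := Real.sqrt_le_sqrt (by linarith)
    rwa [Real.sqrt_sq (by linarith)] at h1
  have h2w : (4 * c + 1) / 3 + r ≤ Real.exp (x + s) := by
    have he : Real.exp (x + s) = (c + s) * Real.exp s := by rw [Real.exp_add, hexps]
    rw [he]
    have hcs : (0:ℝ) ≤ c + s := by linarith
    have := mul_le_mul_of_nonneg_left hexp2 hcs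
    nlinarith [hs2]
  have hAle : A ≤ x + s := by
    have h1 : A ≤ Real.log (Real.exp (x + s)) := Real.log_le_log hden h2w
    rwa [Real.log_exp] at h1
  -- log-derivative simplification
  have hA' : (4 * s / 3 + ((2:ℕ):ℝ) * ((4 * c + 1) / 3) ^ (2 - 1) * (4 * s / 3) / (2 * r)) /
      ((4 * c + 1) / 3 + r) = (4 * s / 3) / r := by
    field_simp
    ring
  have hfA : f * ((4 * s / 3) / r) = 1 := by
    rw [mul_div_assoc', hfr, div_self hr.ne']
  -- the first-derivative term is nonnegative
  have hU' : (2 * s * (2 * c - 2) - (2 * c - 1) * (2 * s)) / (2 * c - 2) ^ 2 =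
      -(2 * s) / (2 * c - 2) ^ 2 := by ring
  have hFnonpos : (2 * s * (2 * c - 2) - (2 * c - 1) * (2 * s)) / (2 * c - 2) ^ 2 / (2 * f) ≤ 0 := by
    rw [hU']
    apply div_nonpos_of_nonpos_of_nonneg
    · apply div_nonpos_of_nonpos_of_nonneg
      · linarith
      · positivity
    · positivity
  have hnn : 0 ≤ (2 * s * (2 * c - 2) - (2 * c - 1) * (2 * s)) / (2 * c - 2) ^ 2 / (2 * f) *
      (A - x - s) := by nlinarith [mul_nonneg (neg_nonneg.mpr hFnonpos) (neg_nonneg.mpr (show A - x - s ≤ 0 by linarith))]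
  have hprod : 0 < (2 - f) * (1 + c) := mul_pos (by linarith) (by linarith)
  apply mul_pos Real.pi_pos
  rw [hA']
  nlinarith [hnn, hfA, hprod]

/-- Monotonicity claim in the proof of Proposition 3.1: V is strictly
increasing on {ℓ > 0 : cosh ℓ ≥ 1.439}. -/
theorem stmt_9 :
    StrictMonoOn muffinCollarVol {ℓ : ℝ | 0 < ℓ ∧ Real.cosh ℓ ≥ 1.439} := by
  have hS : Convex ℝ {ℓ : ℝ | 0 < ℓ ∧ Real.cosh ℓ ≥ 1.439} := by
    rw [convex_iff_ordConnected]
    constructor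
    intro a ha b hb z hz
    refine ⟨lt_of_lt_of_le ha.1 hz.1, le_trans ha.2 ?_⟩
    rw [Real.cosh_le_cosh, abs_of_pos ha.1, abs_of_pos (lt_of_lt_of_le ha.1 hz.1)]
    exact hz.1
  apply strictMonoOn_of_deriv_pos hS
  · intro y hy
    exact ((key y hy.1 hy.2).choose_spec.1).differentiableAt.continuousAt.continuousWithinAt
  · intro y hy
    obtain ⟨d, hd, hdpos⟩ := key y (interior_subset hy).1 (interior_subset hy).2
    rwa [hd.deriv]
end

section
/- Define V : ℝ → ℝ by V(ℓ) = π·[ℓ + 2·sinh ℓ + √((2·cosh ℓ − 1)/(2·cosh ℓ − 2))·(log(w + √(w² − 1)) − ℓ − sinh ℓ)], where w = (4·cosh ℓ + 1)/3. Then for every real ℓ > 0 with cosh ℓ ≥ 1.439, one has V(ℓ) > 6.89. (This is the quantitative step in the proof of Proposition 3.1: when cosh ℓ₁ = 1.439 the formula yields a value greater than 7.1, and V is increasing for cosh ℓ₁ ≥ 1.439, so the bound V(ℓ) > 6.89 holds on the whole range.) -/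
/-- Midpoint bound for the logarithm: `log x ≥ 2(x-1)/(x+1)` for `x ≥ 1`. -/
lemma log_ge_ratio {x : ℝ} (hx : 1 ≤ x) : 2 * (x - 1) / (x + 1) ≤ Real.log x := by
  have key : 0 ≤ (x + 1) * Real.log x - 2 * (x - 1) := by
    set f : ℝ → ℝ := fun y => (y + 1) * Real.log y - 2 * (y - 1) with hf
    have hderiv : ∀ y ∈ interior (Set.Ici (1:ℝ)), 0 ≤ deriv f y := by
      intro y hy
      rw [interior_Ici] at hy
      have hy1 : (1:ℝ) < y := hy
      have hy0 : (0:ℝ) < y := lt_trans one_pos hy1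
      have hd : HasDerivAt f (1 * Real.log y + (y + 1) * y⁻¹ - 2 * 1) y := by
        have h1 : HasDerivAt (fun y : ℝ => y + 1) 1 y := (hasDerivAt_id y).add_const 1
        have h2 : HasDerivAt Real.log y⁻¹ y := Real.hasDerivAt_log (ne_of_gt hy0)
        have h3 : HasDerivAt (fun y : ℝ => 2 * (y - 1)) (2 * 1) y :=
          ((hasDerivAt_id y).sub_const 1).const_mul 2
        exact (h1.mul h2).sub h3
      rw [hd.deriv]
      have hlog : 1 - y⁻¹ ≤ Real.log y := Real.one_sub_inv_le_log_of_pos hy0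
      have : (y + 1) * y⁻¹ = 1 + y⁻¹ := by field_simp
      rw [this]
      nlinarith [hlog]
    have hcont : ContinuousOn f (Set.Ici 1) := by
      apply ContinuousOn.sub
      · exact ContinuousOn.mul (by fun_prop) (Real.continuousOn_log.mono (by
          intro y hy; simp at hy ⊢; linarith))
      · fun_prop
    have hdiff : DifferentiableOn ℝ f (interior (Set.Ici (1:ℝ))) := by
      rw [interior_Ici]
      intro y hy
      have hy0 : (0:ℝ) < y := lt_trans one_pos hy
      apply DifferentiableAt.differentiableWithinAt
      exact ((differentiableAt_id.add_const 1).mul (Real.differentiableAt_log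
        (ne_of_gt hy0))).sub (by fun_prop)
    have hmono := monotoneOn_of_deriv_nonneg (convex_Ici (1:ℝ)) hcont hdiff hderiv
    have := hmono (Set.self_mem_Ici) (Set.mem_Ici.mpr hx) hx
    simpa [hf] using this
  have hx1 : (0:ℝ) < x + 1 := by linarith
  rw [div_le_iff₀ hx1]
  nlinarith [key]

/-- Core lower bound for the bracketed expression in `muffinCollarVol`. -/
lemma X_lb (ℓ c p s w q T P1 S1 S2 K : ℝ)
    (hexp : Real.exp ℓ = c + p)
    (hT2 : 2 ≤ T) (hT : T ≤ c + p)
    (hP1 : P1 ≤ p) (hp0 : 0 ≤ p)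
    (hS1 : s ≤ S1) (hS12 : S1 ≤ 2) (hS2 : S2 ≤ s) (hS20 : 0 ≤ S2)
    (hK1 : 1 ≤ K)
    (hK : K * (c + p) ≤ w + q) :
    Real.log 2 + 2 * (T - 2) / (T + 2) + (2 - S1) * P1 + S2 * (2 * (K - 1) / (K + 1))
      ≤ ℓ + 2 * p + s * (Real.log (w + q) - ℓ - p) := by
  have ht0 : (0:ℝ) < c + p := hexp ▸ Real.exp_pos ℓ
  have hl : ℓ = Real.log (c + p) := by rw [← hexp, Real.log_exp]
  have h1 : Real.log 2 + 2 * (T - 2) / (T + 2) ≤ ℓ := by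
    have hdiv : Real.log ((c + p) / 2) = Real.log (c + p) - Real.log 2 :=
      Real.log_div (ne_of_gt ht0) two_ne_zero
    have hge : 2 * ((c + p) / 2 - 1) / ((c + p) / 2 + 1) ≤ Real.log ((c + p) / 2) :=
      log_ge_ratio (by linarith)
    have heq : 2 * ((c + p) / 2 - 1) / ((c + p) / 2 + 1) = 2 * ((c + p) - 2) / ((c + p) + 2) := by
      rw [div_eq_div_iff (by linarith) (by linarith)]; ring
    have hmono : 2 * (T - 2) / (T + 2) ≤ 2 * ((c + p) - 2) / ((c + p) + 2) := by
      rw [div_le_div_iff₀ (by linarith) (by linarith)]; nlinarith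
    rw [hl]; rw [heq] at hge; linarith
  have hr : 2 * (K - 1) / (K + 1) ≤ Real.log (w + q) - ℓ := by
    have hK0 : (0:ℝ) < K * (c + p) := by positivity
    have h2 : Real.log (K * (c + p)) ≤ Real.log (w + q) :=
      Real.log_le_log hK0 hK
    have h3 : Real.log (K * (c + p)) = Real.log K + Real.log (c + p) :=
      Real.log_mul (by positivity) (ne_of_gt ht0)
    have h4 : 2 * (K - 1) / (K + 1) ≤ Real.log K := log_ge_ratio hK1
    rw [hl]; linarith
  have hR0 : 0 ≤ 2 * (K - 1) / (K + 1) := div_nonneg (by linarith) (by linarith)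
  have hs0 : 0 ≤ s := le_trans hS20 hS2
  have hsr : S2 * (2 * (K - 1) / (K + 1)) ≤ s * (Real.log (w + q) - ℓ) :=
    mul_le_mul hS2 hr hR0 hs0
  have hsp : s * p ≤ S1 * p := mul_le_mul_of_nonneg_right hS1 hp0
  have hP : (2 - S1) * P1 ≤ (2 - S1) * p := mul_le_mul_of_nonneg_left hP1 (by linarith)
  nlinarith [hsr, hsp, hP, h1]

lemma hM1 (c p : ℝ) (hp2 : p ^ 2 = c ^ 2 - 1) (hlo : (1.439:ℝ) ≤ c)
    (hhi : c ≤ 1.489) (hP1 : (1.034:ℝ) ≤ p) (hP2 : p ≤ 1.104) :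
    ((1.70:ℝ) * (c + p) - (4 * c + 1) / 3) ^ 2 ≤ ((4 * c + 1) / 3) ^ 2 - 1 := by
  nlinarith [hp2, sq_nonneg (c - 1.439),
    mul_nonneg (by linarith : (0:ℝ) ≤ 1.489 - c) (by linarith : (0:ℝ) ≤ 1.104 - p)]

lemma hM2 (c p : ℝ) (hp2 : p ^ 2 = c ^ 2 - 1) (hlo : (1.489:ℝ) ≤ c)
    (hhi : c ≤ 1.6) (hP1 : (1.103:ℝ) ≤ p) (hP2 : p ≤ 1.250) :
    ((1.65:ℝ) * (c + p) - (4 * c + 1) / 3) ^ 2 ≤ ((4 * c + 1) / 3) ^ 2 - 1 := by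
  nlinarith [hp2, sq_nonneg (c - 1.489),
    mul_nonneg (by linarith : (0:ℝ) ≤ 1.6 - c) (by linarith : (0:ℝ) ≤ 1.250 - p)]

lemma hM3 (c p : ℝ) (hp2 : p ^ 2 = c ^ 2 - 1) (hlo : (1.6:ℝ) ≤ c)
    (hhi : c ≤ 1.749) (hP1 : (1.248:ℝ) ≤ p) (hP2 : p ≤ 1.435) :
    ((1.60:ℝ) * (c + p) - (4 * c + 1) / 3) ^ 2 ≤ ((4 * c + 1) / 3) ^ 2 - 1 := by
  nlinarith [hp2, sq_nonneg (c - 1.6),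
    mul_nonneg (by linarith : (0:ℝ) ≤ 1.749 - c) (by linarith : (0:ℝ) ≤ 1.435 - p)]

lemma hM4 (c p : ℝ) (hp2 : p ^ 2 = c ^ 2 - 1) (hlo : (1.749:ℝ) ≤ c)
    (hhi : c ≤ 2) (hP1 : (1.434:ℝ) ≤ p) (hP2 : p ≤ 1.733) :
    ((1.56:ℝ) * (c + p) - (4 * c + 1) / 3) ^ 2 ≤ ((4 * c + 1) / 3) ^ 2 - 1 := by
  nlinarith [hp2, sq_nonneg (c - 1.749),
    mul_nonneg (by linarith : (0:ℝ) ≤ 2 - c) (by linarith : (0:ℝ) ≤ 1.733 - p)]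

lemma hM5 (c p : ℝ) (hp2 : p ^ 2 = c ^ 2 - 1) (hlo : (2:ℝ) ≤ c) (hP1 : (1.732:ℝ) ≤ p) :
    (((4/3):ℝ) * (c + p) - (4 * c + 1) / 3) ^ 2 ≤ ((4 * c + 1) / 3) ^ 2 - 1 := by
  nlinarith [hp2, hP1, hlo]

set_option maxHeartbeats 1000000 in
/-- Quantitative step in the proof of Proposition 3.1: V(ℓ) > 6.89 whenever
ℓ > 0 and cosh ℓ ≥ 1.439. -/
theorem stmt_10 (ℓ : ℝ) (hℓ : 0 < ℓ) (h : Real.cosh ℓ ≥ 1.439) :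
    muffinCollarVol ℓ > 6.89 := by
  show Real.pi * (ℓ + 2 * Real.sinh ℓ
    + Real.sqrt ((2 * Real.cosh ℓ - 1) / (2 * Real.cosh ℓ - 2))
      * (Real.log ((4 * Real.cosh ℓ + 1) / 3
          + Real.sqrt (((4 * Real.cosh ℓ + 1) / 3) ^ 2 - 1)) - ℓ - Real.sinh ℓ)) > 6.89
  set c := Real.cosh ℓ with hc
  set p := Real.sinh ℓ with hp
  have hc1 : (1.439:ℝ) ≤ c := h
  have hc0 : (0:ℝ) ≤ c := by linarith
  have hp2 : p ^ 2 = c ^ 2 - 1 := Real.sinh_sq ℓ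
  have hp0 : 0 < p := by rw [hp]; exact Real.sinh_pos_iff.mpr hℓ
  have hexp : Real.exp ℓ = c + p := (Real.cosh_add_sinh ℓ).symm
  set w := (4 * c + 1) / 3 with hw
  set q := Real.sqrt (w ^ 2 - 1) with hq
  have hw1 : (1:ℝ) ≤ w := by rw [hw]; linarith
  have hq2 : q ^ 2 = w ^ 2 - 1 := Real.sq_sqrt (by nlinarith [hw1])
  have hq0 : 0 ≤ q := Real.sqrt_nonneg _
  set s := Real.sqrt ((2 * c - 1) / (2 * c - 2)) with hs
  have hden : (0:ℝ) < 2 * c - 2 := by linarith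
  have hs2 : s ^ 2 * (2 * c - 2) = 2 * c - 1 := by
    rw [hs, Real.sq_sqrt (div_nonneg (by linarith) (by linarith))]
    field_simp
    exact mul_div_cancel_right₀ _ (by linarith : c - 1 ≠ 0)
  have hpeq : p = Real.sqrt (c ^ 2 - 1) := by rw [← hp2, Real.sqrt_sq hp0.le]
  have p_ge : ∀ P : ℝ, 0 ≤ P → P ^ 2 ≤ c ^ 2 - 1 → P ≤ p := by
    intro P hP0 hPP
    rw [hpeq]
    calc P = Real.sqrt (P ^ 2) := (Real.sqrt_sq hP0).symm
      _ ≤ Real.sqrt (c ^ 2 - 1) := Real.sqrt_le_sqrt hPP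
  have p_le : ∀ P : ℝ, 0 ≤ P → c ^ 2 - 1 ≤ P ^ 2 → p ≤ P := by
    intro P hP0 hPP
    rw [hpeq]
    calc Real.sqrt (c ^ 2 - 1) ≤ Real.sqrt (P ^ 2) := Real.sqrt_le_sqrt hPP
      _ = P := Real.sqrt_sq hP0
  have s_le : ∀ S : ℝ, 0 ≤ S → (2 * c - 1) / (2 * c - 2) ≤ S ^ 2 → s ≤ S := by
    intro S hS0 hSS
    rw [hs]
    calc Real.sqrt ((2 * c - 1) / (2 * c - 2)) ≤ Real.sqrt (S ^ 2) := Real.sqrt_le_sqrt hSS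
      _ = S := Real.sqrt_sq hS0
  have s_ge : ∀ S : ℝ, 0 ≤ S → S ^ 2 ≤ (2 * c - 1) / (2 * c - 2) → S ≤ s := by
    intro S hS0 hSS
    rw [hs]
    calc S = Real.sqrt (S ^ 2) := (Real.sqrt_sq hS0).symm
      _ ≤ Real.sqrt ((2 * c - 1) / (2 * c - 2)) := Real.sqrt_le_sqrt hSS
  have hs1 : (1:ℝ) ≤ s := s_ge 1 (by norm_num) (by rw [le_div_iff₀ hden]; linarith)
  have hpi := Real.pi_gt_d6
  have main : (2.19316:ℝ) < ℓ + 2 * p + s * (Real.log (w + q) - ℓ - p) := by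
    rcases le_or_gt c 1.489 with hhi | h1
    · -- interval [1.439, 1.489]
      have hlo : (1.439:ℝ) ≤ c := hc1
      have hP1 : (1.034:ℝ) ≤ p := p_ge 1.034 (by norm_num)
        (by linarith [pow_le_pow_left₀ (by norm_num : (0:ℝ) ≤ 1.439) hlo 2])
      have hP2 : p ≤ 1.104 := p_le 1.104 (by norm_num)
        (by linarith [pow_le_pow_left₀ hc0 hhi 2])
      have hS1 : s ≤ 1.463 := s_le 1.463 (by norm_num) (by rw [div_le_iff₀ hden]; linarith)
      have hS2 : (1.422:ℝ) ≤ s := s_ge 1.422 (by norm_num) (by rw [le_div_iff₀ hden]; linarith)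
      have hM : ((1.70:ℝ) * (c + p) - w) ^ 2 ≤ q ^ 2 := by
        rw [hq2, hw]; exact hM1 c p hp2 hlo hhi hP1 hP2
      have hM0 : (0:ℝ) ≤ 1.70 * (c + p) - w := by rw [hw]; linarith
      have hK : (1.70:ℝ) * (c + p) ≤ w + q := by
        have h5 : 1.70 * (c + p) - w ≤ q := by
          calc 1.70 * (c + p) - w = Real.sqrt ((1.70 * (c + p) - w) ^ 2) :=
                (Real.sqrt_sq hM0).symm
            _ ≤ Real.sqrt (q ^ 2) := Real.sqrt_le_sqrt hM
            _ = q := Real.sqrt_sq hq0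
        linarith
      have hX := X_lb ℓ c p s w q 2.473 1.034 1.463 1.422 1.70 hexp (by norm_num)
        (by linarith) hP1 hp0.le hS1 (by norm_num) hS2 (by norm_num) (by norm_num) hK
      linarith [hX, Real.log_two_gt_d9]
    rcases le_or_gt c 1.6 with hhi | h2
    · -- interval [1.489, 1.6]
      have hlo : (1.489:ℝ) ≤ c := h1.le
      have hP1 : (1.103:ℝ) ≤ p := p_ge 1.103 (by norm_num)
        (by linarith [pow_le_pow_left₀ (by norm_num : (0:ℝ) ≤ 1.489) hlo 2])
      have hP2 : p ≤ 1.250 := p_le 1.250 (by norm_num)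
        (by linarith [pow_le_pow_left₀ hc0 hhi 2])
      have hS1 : s ≤ 1.423 := s_le 1.423 (by norm_num) (by rw [div_le_iff₀ hden]; linarith)
      have hS2 : (1.343:ℝ) ≤ s := s_ge 1.343 (by norm_num) (by rw [le_div_iff₀ hden]; linarith)
      have hM : ((1.65:ℝ) * (c + p) - w) ^ 2 ≤ q ^ 2 := by
        rw [hq2, hw]; exact hM2 c p hp2 hlo hhi hP1 hP2
      have hM0 : (0:ℝ) ≤ 1.65 * (c + p) - w := by rw [hw]; linarith
      have hK : (1.65:ℝ) * (c + p) ≤ w + q := by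
        have h5 : 1.65 * (c + p) - w ≤ q := by
          calc 1.65 * (c + p) - w = Real.sqrt ((1.65 * (c + p) - w) ^ 2) :=
                (Real.sqrt_sq hM0).symm
            _ ≤ Real.sqrt (q ^ 2) := Real.sqrt_le_sqrt hM
            _ = q := Real.sqrt_sq hq0
        linarith
      have hX := X_lb ℓ c p s w q 2.592 1.103 1.423 1.343 1.65 hexp (by norm_num)
        (by linarith) hP1 hp0.le hS1 (by norm_num) hS2 (by norm_num) (by norm_num) hK
      linarith [hX, Real.log_two_gt_d9]
    rcases le_or_gt c 1.749 with hhi | h3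
    · -- interval [1.6, 1.749]
      have hlo : (1.6:ℝ) ≤ c := h2.le
      have hP1 : (1.248:ℝ) ≤ p := p_ge 1.248 (by norm_num)
        (by linarith [pow_le_pow_left₀ (by norm_num : (0:ℝ) ≤ 1.6) hlo 2])
      have hP2 : p ≤ 1.435 := p_le 1.435 (by norm_num)
        (by linarith [pow_le_pow_left₀ hc0 hhi 2])
      have hS1 : s ≤ 1.355 := s_le 1.355 (by norm_num) (by rw [div_le_iff₀ hden]; linarith)
      have hS2 : (1.291:ℝ) ≤ s := s_ge 1.291 (by norm_num) (by rw [le_div_iff₀ hden]; linarith)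
      have hM : ((1.60:ℝ) * (c + p) - w) ^ 2 ≤ q ^ 2 := by
        rw [hq2, hw]; exact hM3 c p hp2 hlo hhi hP1 hP2
      have hM0 : (0:ℝ) ≤ 1.60 * (c + p) - w := by rw [hw]; linarith
      have hK : (1.60:ℝ) * (c + p) ≤ w + q := by
        have h5 : 1.60 * (c + p) - w ≤ q := by
          calc 1.60 * (c + p) - w = Real.sqrt ((1.60 * (c + p) - w) ^ 2) :=
                (Real.sqrt_sq hM0).symm
            _ ≤ Real.sqrt (q ^ 2) := Real.sqrt_le_sqrt hM
            _ = q := Real.sqrt_sq hq0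
        linarith
      have hX := X_lb ℓ c p s w q 2.848 1.248 1.355 1.291 1.60 hexp (by norm_num)
        (by linarith) hP1 hp0.le hS1 (by norm_num) hS2 (by norm_num) (by norm_num) hK
      linarith [hX, Real.log_two_gt_d9]
    rcases le_or_gt c 2 with hhi | h4
    · -- interval [1.749, 2]
      have hlo : (1.749:ℝ) ≤ c := h3.le
      have hP1 : (1.434:ℝ) ≤ p := p_ge 1.434 (by norm_num)
        (by linarith [pow_le_pow_left₀ (by norm_num : (0:ℝ) ≤ 1.749) hlo 2])
      have hP2 : p ≤ 1.733 := p_le 1.733 (by norm_num)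
        (by linarith [pow_le_pow_left₀ hc0 hhi 2])
      have hS1 : s ≤ 1.292 := s_le 1.292 (by norm_num) (by rw [div_le_iff₀ hden]; linarith)
      have hS2 : (1.224:ℝ) ≤ s := s_ge 1.224 (by norm_num) (by rw [le_div_iff₀ hden]; linarith)
      have hM : ((1.56:ℝ) * (c + p) - w) ^ 2 ≤ q ^ 2 := by
        rw [hq2, hw]; exact hM4 c p hp2 hlo hhi hP1 hP2
      have hM0 : (0:ℝ) ≤ 1.56 * (c + p) - w := by rw [hw]; linarith
      have hK : (1.56:ℝ) * (c + p) ≤ w + q := by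
        have h5 : 1.56 * (c + p) - w ≤ q := by
          calc 1.56 * (c + p) - w = Real.sqrt ((1.56 * (c + p) - w) ^ 2) :=
                (Real.sqrt_sq hM0).symm
            _ ≤ Real.sqrt (q ^ 2) := Real.sqrt_le_sqrt hM
            _ = q := Real.sqrt_sq hq0
        linarith
      have hX := X_lb ℓ c p s w q 3.183 1.434 1.292 1.224 1.56 hexp (by norm_num)
        (by linarith) hP1 hp0.le hS1 (by norm_num) hS2 (by norm_num) (by norm_num) hK
      linarith [hX, Real.log_two_gt_d9]
    · -- interval [2, ∞]
      have hlo : (2:ℝ) ≤ c := h4.le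
      have hP1 : (1.732:ℝ) ≤ p := p_ge 1.732 (by norm_num)
        (by linarith [pow_le_pow_left₀ (by norm_num : (0:ℝ) ≤ 2) hlo 2])
      have hS1 : s ≤ 1.225 := s_le 1.225 (by norm_num) (by rw [div_le_iff₀ hden]; linarith)
      have hS2 : (1:ℝ) ≤ s := hs1
      have hM : (((4/3):ℝ) * (c + p) - w) ^ 2 ≤ q ^ 2 := by
        rw [hq2, hw]; exact hM5 c p hp2 hlo hP1
      have hM0 : (0:ℝ) ≤ (4/3) * (c + p) - w := by rw [hw]; linarith
      have hK : ((4/3):ℝ) * (c + p) ≤ w + q := by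
        have h5 : (4/3) * (c + p) - w ≤ q := by
          calc (4/3) * (c + p) - w = Real.sqrt (((4/3) * (c + p) - w) ^ 2) :=
                (Real.sqrt_sq hM0).symm
            _ ≤ Real.sqrt (q ^ 2) := Real.sqrt_le_sqrt hM
            _ = q := Real.sqrt_sq hq0
        linarith
      have hX := X_lb ℓ c p s w q 3.732 1.732 1.225 1 (4/3) hexp (by norm_num)
        (by linarith) hP1 hp0.le hS1 (by norm_num) hS2 (by norm_num) (by norm_num) hK
      linarith [hX, Real.log_two_gt_d9]
  have h2 : (3.141592:ℝ) * 2.19316 ≤ Real.pi * (ℓ + 2 * p + s * (Real.log (w + q) - ℓ - p)) :=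
    mul_le_mul hpi.le main.le (by norm_num) Real.pi_pos.le
  have h3 : (6.89:ℝ) < 3.141592 * 2.19316 := by norm_num
  linarith
end

section
/- Let F be the free group on two generators x and y. Then the subgroup of F generated by {x, y·x⁻¹·y²} is a proper subgroup of F, and the subgroup of F generated by {x, y⁻¹·x⁻¹·y²} is a proper subgroup of F. (This is the claim used in Lemma 5.4: neither of the pairs (x, y x⁻¹ y²) or (x, y⁻¹ x⁻¹ y²) generates the free group on x and y, so the inclusion homomorphism π₁(Z₀) → π₁(Y) is not surjective.) -/
/-- Claim used in Lemma 5.4: neither of the pairs (x, y x⁻¹ y²) or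
(x, y⁻¹ x⁻¹ y²) generates the free group on x and y. -/
theorem stmt_13 :
    let x : FreeGroup (Fin 2) := FreeGroup.of 0
    let y : FreeGroup (Fin 2) := FreeGroup.of 1
    Subgroup.closure ({x, y * x⁻¹ * y ^ 2} : Set (FreeGroup (Fin 2))) ≠ ⊤ ∧
      Subgroup.closure ({x, y⁻¹ * x⁻¹ * y ^ 2} : Set (FreeGroup (Fin 2))) ≠ ⊤ := by
  intro x y
  set a : Equiv.Perm (Fin 4) := Equiv.swap 2 3 with ha
  set b : Equiv.Perm (Fin 4) := finRotate 4 with hb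
  set φ : FreeGroup (Fin 2) →* Equiv.Perm (Fin 4) := FreeGroup.lift ![a, b] with hφ
  have hx : φ x = a := FreeGroup.lift_apply_of
  have hy : φ y = b := FreeGroup.lift_apply_of
  have key : ∀ (w : FreeGroup (Fin 2)) (pt : Fin 4), φ w pt = pt → a pt = pt →
      b pt ≠ pt → Subgroup.closure ({x, w} : Set (FreeGroup (Fin 2))) ≠ ⊤ := by
    intro w pt hw hapt hbpt h
    apply hbpt
    have hymem : y ∈ Subgroup.closure ({x, w} : Set (FreeGroup (Fin 2))) := by
      rw [h]; trivial
    have : φ y ∈ Subgroup.map φ (Subgroup.closure ({x, w} : Set (FreeGroup (Fin 2)))) :=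
      ⟨y, hymem, rfl⟩
    rw [MonoidHom.map_closure] at this
    have hle : Subgroup.closure (φ '' {x, w}) ≤ MulAction.stabilizer (Equiv.Perm (Fin 4)) pt := by
      apply Subgroup.closure_le _ |>.2
      rintro g ⟨u, hu, rfl⟩
      rcases hu with rfl | rfl
      · simpa [MulAction.mem_stabilizer_iff, hx] using hapt
      · simpa [MulAction.mem_stabilizer_iff] using hw
    have := hle this
    rw [hy] at this
    exact this
  constructor
  · apply key _ 0
    · rw [map_mul, map_mul, map_inv, map_pow, hx, hy]; decide
    · decide
    · decide
  · apply key _ 1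
    · rw [map_mul, map_mul, map_inv, map_inv, map_pow, hx, hy]; decide
    · decide
    · decide
end

section
/- Let F be the free group on two generators x and y. Then none of the five elements x, y·x⁻¹·y², x⁻¹·y·x⁻¹·y², y⁻¹·x⁻¹·y², x⁻¹·y⁻¹·x⁻¹·y² is a proper power in F; that is, for each such element w, there are no g ∈ F and integer n with |n| ≥ 2 such that g^n = w. (This is the final claim in the proof of Lemma 5.4: none of the elements x, y x⁻¹ y², x⁻¹ y x⁻¹ y², y⁻¹ x⁻¹ y², x⁻¹ y⁻¹ x⁻¹ y² is a proper power in the free group on x and y.) -/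
lemma aux_not_proper_power (w : FreeGroup (Fin 2)) (a b : ℤ)
    (h : (FreeGroup.lift (fun i : Fin 2 =>
        Multiplicative.ofAdd (if i = 0 then a else b))) w = Multiplicative.ofAdd 1) :
    ¬ ∃ (g : FreeGroup (Fin 2)) (n : ℤ), 2 ≤ |n| ∧ g ^ n = w := by
  rintro ⟨g, n, hn, rfl⟩
  rw [map_zpow] at h
  set m := Multiplicative.toAdd ((FreeGroup.lift (fun i : Fin 2 =>
      Multiplicative.ofAdd (if i = 0 then a else b))) g) with hm
  have h2 : n * m = 1 := by
    have := congrArg Multiplicative.toAdd h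
    simpa [toAdd_zpow, mul_comm] using this
  have : IsUnit n := IsUnit.of_mul_eq_one m h2
  rcases Int.isUnit_iff.mp this with rfl | rfl <;> simp at hn

/-- Final claim in the proof of Lemma 5.4: none of the elements x, y x⁻¹ y²,
x⁻¹ y x⁻¹ y², y⁻¹ x⁻¹ y², x⁻¹ y⁻¹ x⁻¹ y² is a proper power in the free group
on x and y. -/
theorem stmt_14 :
    let x : FreeGroup (Fin 2) := FreeGroup.of 0
    let y : FreeGroup (Fin 2) := FreeGroup.of 1
    ∀ w ∈ ({x, y * x⁻¹ * y ^ 2, x⁻¹ * y * x⁻¹ * y ^ 2, y⁻¹ * x⁻¹ * y ^ 2,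
        x⁻¹ * y⁻¹ * x⁻¹ * y ^ 2} : Set (FreeGroup (Fin 2))),
      ¬ ∃ (g : FreeGroup (Fin 2)) (n : ℤ), 2 ≤ |n| ∧ g ^ n = w := by
  intro x y w hw
  simp only [Set.mem_insert_iff, Set.mem_singleton_iff] at hw
  rcases hw with rfl | rfl | rfl | rfl | rfl
  · exact aux_not_proper_power _ 1 0 (by simp [x, FreeGroup.lift_apply_of])
  · exact aux_not_proper_power _ 2 1 (by
      simp only [x, y, map_mul, map_inv, map_pow, FreeGroup.lift_apply_of]
      simp [← ofAdd_add, ← ofAdd_neg]; rfl)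
  · exact aux_not_proper_power _ 1 1 (by
      simp only [x, y, map_mul, map_inv, map_pow, FreeGroup.lift_apply_of]
      simp [← ofAdd_add, ← ofAdd_neg]; rfl)
  · exact aux_not_proper_power _ 0 1 (by
      simp only [x, y, map_mul, map_inv, map_pow, FreeGroup.lift_apply_of]
      simp [← ofAdd_add, ← ofAdd_neg]; rfl)
  · exact aux_not_proper_power _ 0 1 (by
      simp only [x, y, map_mul, map_inv, map_pow, FreeGroup.lift_apply_of]
      simp [← ofAdd_add, ← ofAdd_neg]; rfl)
end

section
/- Let F₃ be the free group on three generators t, u₁, u₂ and let G be the quotient of F₃ by the normal closure of the single element t²·u₁·t·u₂ (i.e., the presented group ⟨t, u₁, u₂ : t²u₁tu₂ = 1⟩). Then the homomorphism from the free group on two generators a, b to G determined by a ↦ [u₁] and b ↦ [t]⁻¹ (where [·] denotes the image in G) is a group isomorphism. In particular, G is free of rank 2, freely generated by x := [u₁] and y := [t]⁻¹, and in G one has [u₂] = y·x⁻¹·y². (This is the 'theta case' of the presentation analysis in the proof of Lemma 5.2: the group with presentation |t,u₁,u₂ : t²u₁tu₂ = 1| is free on the generators ū₁ and t̄⁻¹,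 with ū₂ = y x⁻¹ y².) -/
/-- The single relator t²u₁tu₂ of the 'theta case' presentation. -/
def thetaRels : Set (FreeGroup (Fin 3)) :=
  {FreeGroup.of 0 ^ 2 * FreeGroup.of 1 * FreeGroup.of 0 * FreeGroup.of 2}

/-- The homomorphism from the free group on two generators a, b to the presented
group ⟨t, u₁, u₂ : t²u₁tu₂ = 1⟩ determined by a ↦ [u₁] and b ↦ [t]⁻¹. -/
noncomputable def thetaMap : FreeGroup (Fin 2) →* PresentedGroup thetaRels :=
  FreeGroup.lift (fun i =>
    if i = 0 then PresentedGroup.mk thetaRels (FreeGroup.of 1)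
    else (PresentedGroup.mk thetaRels (FreeGroup.of 0))⁻¹)

lemma theta_rel :
    (PresentedGroup.mk thetaRels (FreeGroup.of 0)) ^ 2
      * PresentedGroup.mk thetaRels (FreeGroup.of 1)
      * PresentedGroup.mk thetaRels (FreeGroup.of 0)
      * PresentedGroup.mk thetaRels (FreeGroup.of 2) = 1 := by
  have : PresentedGroup.mk thetaRels
      (FreeGroup.of 0 ^ 2 * FreeGroup.of 1 * FreeGroup.of 0 * FreeGroup.of 2) = 1 := by
    apply (QuotientGroup.eq_one_iff _).mpr
    exact Subgroup.subset_normalClosure rfl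
  simpa using this

lemma theta_u2 :
    PresentedGroup.mk thetaRels (FreeGroup.of 2)
      = (PresentedGroup.mk thetaRels (FreeGroup.of 0))⁻¹
          * (PresentedGroup.mk thetaRels (FreeGroup.of 1))⁻¹
          * ((PresentedGroup.mk thetaRels (FreeGroup.of 0))⁻¹) ^ 2 := by
  have h := theta_rel
  set t := PresentedGroup.mk thetaRels (FreeGroup.of 0)
  set u := PresentedGroup.mk thetaRels (FreeGroup.of 1)
  have := eq_inv_of_mul_eq_one_right h
  rw [this]; group

/-- The inverse map, defined on the free group. -/
noncomputable def thetaInvF : FreeGroup (Fin 3) →* FreeGroup (Fin 2) :=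
  FreeGroup.lift (fun i =>
    if i = 0 then (FreeGroup.of 1)⁻¹
    else if i = 1 then FreeGroup.of 0
    else FreeGroup.of 1 * (FreeGroup.of 0)⁻¹ * FreeGroup.of 1 ^ 2)

lemma thetaInvF_of0 : thetaInvF (FreeGroup.of 0) = (FreeGroup.of 1)⁻¹ := by
  rw [thetaInvF, FreeGroup.lift_apply_of]; rfl

lemma thetaInvF_of1 : thetaInvF (FreeGroup.of 1) = FreeGroup.of 0 := by
  rw [thetaInvF, FreeGroup.lift_apply_of]; rfl

lemma thetaInvF_of2 :
    thetaInvF (FreeGroup.of 2) = FreeGroup.of 1 * (FreeGroup.of 0)⁻¹ * FreeGroup.of 1 ^ 2 := by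
  rw [thetaInvF, FreeGroup.lift_apply_of]; rfl

lemma thetaInvF_rels : ∀ r ∈ thetaRels, thetaInvF r = 1 := by
  intro r hr
  rcases hr with rfl
  simp only [map_mul, map_pow, thetaInvF_of0, thetaInvF_of1, thetaInvF_of2]
  group

noncomputable def thetaInv : PresentedGroup thetaRels →* FreeGroup (Fin 2) :=
  PresentedGroup.toGroup thetaInvF_rels

lemma thetaInv_mk (w : FreeGroup (Fin 3)) :
    thetaInv (PresentedGroup.mk thetaRels w) = thetaInvF w := rfl

lemma thetaMap_of0 : thetaMap (FreeGroup.of 0) = PresentedGroup.mk thetaRels (FreeGroup.of 1) := by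
  rw [thetaMap, FreeGroup.lift_apply_of]; rfl

lemma thetaMap_of1 :
    thetaMap (FreeGroup.of 1) = (PresentedGroup.mk thetaRels (FreeGroup.of 0))⁻¹ := by
  rw [thetaMap, FreeGroup.lift_apply_of]; rfl

lemma left_inv : thetaInv.comp thetaMap = MonoidHom.id _ := by
  apply FreeGroup.ext_hom
  intro i
  fin_cases i
  · simp [thetaMap_of0, thetaInv_mk, thetaInvF_of1]
  · simp [thetaMap_of1, thetaInv_mk, thetaInvF_of0]

lemma right_inv : thetaMap.comp thetaInv = MonoidHom.id _ := by
  apply PresentedGroup.ext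
  intro i
  have h2 := theta_u2
  match i with
  | 0 => simp [PresentedGroup.of, thetaInv_mk, thetaInvF_of0, thetaMap_of1]
  | 1 => simp [PresentedGroup.of, thetaInv_mk, thetaInvF_of1, thetaMap_of0]
  | 2 =>
    simp only [MonoidHom.comp_apply, MonoidHom.id_apply, PresentedGroup.of, thetaInv_mk,
      thetaInvF_of2, thetaInvF_of0, thetaInvF_of1, map_mul, map_inv, map_pow, thetaMap_of0, thetaMap_of1, h2]
    group

/-- 'Theta case' of the presentation analysis in the proof of Lemma 5.2: the
group ⟨t,u₁,u₂ : t²u₁tu₂ = 1⟩ is free on x = [u₁] and y = [t]⁻¹, and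
[u₂] = y x⁻¹ y². -/
theorem stmt_15 :
    Function.Bijective thetaMap ∧
      PresentedGroup.mk thetaRels (FreeGroup.of 2)
        = (PresentedGroup.mk thetaRels (FreeGroup.of 0))⁻¹
            * (PresentedGroup.mk thetaRels (FreeGroup.of 1))⁻¹
            * ((PresentedGroup.mk thetaRels (FreeGroup.of 0))⁻¹) ^ 2 := by
  refine ⟨⟨?_, ?_⟩, theta_u2⟩
  · intro x y h
    have := congrArg thetaInv h
    simpa [← MonoidHom.comp_apply, left_inv] using this
  · intro y
    refine ⟨thetaInv y, ?_⟩
    have := congrArg (fun f : PresentedGroup thetaRels →* PresentedGroup thetaRels => f y) right_inv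
    simpa using this
end
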